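/- The function x ↦ (ln 4 + ln(x−1)) / ln x is strictly increasing on the interval (25/16, 2]; consequently, for every x ∈ (25/16, 2], one has (ln 4 + ln(x−1)) / ln x ≤ 2. -/

import Mathlib

open Real Set

noncomputable def gAux (x : ℝ) : ℝ :=
  x * Real.log x - (x - 1) * (Real.log 4 + Real.log (x - 1))

lemma log_four : Real.log 4 = 2 * Real.log 2 := by
  rw [show (4:ℝ) = 2^2 by norm_num, Real.log_pow]; push_cast; ring

lemma gAux_two : gAux 2 = 0 := by
  have : Real.log ((2:ℝ)-1) = 0 := by norm_num
  simp [gAux, log_four, this]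
  ring

lemma gAux_deriv {x : ℝ} (hx1 : 1 < x) :
    HasDerivAt gAux (Real.log x - Real.log (4 * (x - 1))) x := by
  have hx0 : x ≠ 0 := by linarith
  have hx1' : x - 1 ≠ 0 := by intro h; nlinarith
  have h1 : HasDerivAt (fun x : ℝ => x * Real.log x) (1 * Real.log x + x * x⁻¹) x :=
    (hasDerivAt_id x).mul (Real.hasDerivAt_log hx0)
  have h2 : HasDerivAt (fun x : ℝ => Real.log (x - 1)) ((x - 1)⁻¹ * 1) x :=
    (Real.hasDerivAt_log hx1').comp x (h := fun x : ℝ => x - 1) ((hasDerivAt_id x).sub_const 1)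
  have h3 : HasDerivAt (fun x : ℝ => (x - 1) * (Real.log 4 + Real.log (x - 1)))
      (1 * (Real.log 4 + Real.log (x - 1)) + (x - 1) * (0 + (x - 1)⁻¹ * 1)) x :=
    ((hasDerivAt_id x).sub_const 1).mul ((hasDerivAt_const x _).add h2)
  have h := h1.sub h3
  refine (show HasDerivAt gAux _ x from h).congr_deriv ?_
  symm
  rw [Real.log_mul (by norm_num) hx1']
  field_simp
  ring

lemma gAux_pos {x : ℝ} (hx : x ∈ Set.Ioo (25/16 : ℝ) 2) : 0 < gAux x := by
  have hanti : StrictAntiOn gAux (Set.Icc (25/16 : ℝ) 2) := by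
    apply strictAntiOn_of_deriv_neg (convex_Icc _ _)
    · intro y hy
      have h0 : y ≠ 0 := by have := hy.1; intro h; rw [h] at this; norm_num at this
      have h1 : y - 1 ≠ 0 := by have := hy.1; intro h; nlinarith
      have hc : ContinuousAt (fun x : ℝ => Real.log (x - 1)) y :=
        ContinuousAt.log (continuousAt_id.sub continuousAt_const) h1
      exact ((continuousAt_id.mul (Real.continuousAt_log h0)).sub
        ((continuousAt_id.sub continuousAt_const).mul
          (continuousAt_const.add hc))).continuousWithinAt
    · intro y hy
      rw [interior_Icc] at hy
      rw [(gAux_deriv (by linarith [hy.1] : (1:ℝ) < y)).deriv]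
      have hlt : y < 4 * (y - 1) := by linarith [hy.1]
      have := Real.log_lt_log (by linarith [hy.1] : (0:ℝ) < y) hlt
      linarith
  have := hanti ⟨hx.1.le, hx.2.le⟩ ⟨by norm_num, le_refl 2⟩ hx.2
  rw [gAux_two] at this; exact this

/-- The function `x ↦ (ln 4 + ln(x−1)) / ln x` is strictly increasing on `(25/16, 2]`;
consequently it is at most `2` there. -/
theorem log_ratio_strictMonoOn_and_le_two :
    StrictMonoOn (fun x : ℝ => (Real.log 4 + Real.log (x - 1)) / Real.log x)
        (Set.Ioc (25 / 16 : ℝ) 2) ∧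
      ∀ x ∈ Set.Ioc (25 / 16 : ℝ) 2,
        (Real.log 4 + Real.log (x - 1)) / Real.log x ≤ 2 := by
  have hmono : StrictMonoOn (fun x : ℝ => (Real.log 4 + Real.log (x - 1)) / Real.log x)
      (Set.Ioc (25 / 16 : ℝ) 2) := by
    apply strictMonoOn_of_deriv_pos (convex_Ioc _ _)
    · intro y hy
      have hy1 : (1:ℝ) < y := by linarith [hy.1]
      have h0 : y ≠ 0 := by linarith
      have h1 : y - 1 ≠ 0 := by intro h; nlinarith
      have hlog : Real.log y ≠ 0 := (Real.log_pos hy1).ne'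
      have hc : ContinuousAt (fun x : ℝ => Real.log (x - 1)) y :=
        ContinuousAt.log (continuousAt_id.sub continuousAt_const) h1
      have hcd : ContinuousAt (fun x : ℝ => Real.log x) y := Real.continuousAt_log h0
      exact ((continuousAt_const.add hc).div hcd hlog).continuousWithinAt
    · intro y hy
      rw [interior_Ioc] at hy
      have hy1 : (1:ℝ) < y := by linarith [hy.1]
      have h0 : y ≠ 0 := by linarith
      have h1 : y - 1 ≠ 0 := by intro h; nlinarith
      have hlogpos : 0 < Real.log y := Real.log_pos hy1
      have hN : HasDerivAt (fun x : ℝ => Real.log 4 + Real.log (x - 1)) (0 + (y - 1)⁻¹ * 1) y :=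
        (hasDerivAt_const y _).add
          ((Real.hasDerivAt_log h1).comp y (h := fun x : ℝ => x - 1) ((hasDerivAt_id y).sub_const 1))
      have hD : HasDerivAt Real.log y⁻¹ y := Real.hasDerivAt_log h0
      have hf : HasDerivAt (fun x : ℝ => (Real.log 4 + Real.log (x - 1)) / Real.log x)
          (((0 + (y - 1)⁻¹ * 1) * Real.log y - (Real.log 4 + Real.log (y - 1)) * y⁻¹) /
            Real.log y ^ 2) y := hN.div hD hlogpos.ne'
      rw [hf.deriv]
      apply div_pos
      · have hnum : (0 + (y - 1)⁻¹ * 1) * Real.log y - (Real.log 4 + Real.log (y - 1)) * y⁻¹ =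
            gAux y / (y * (y - 1)) := by
          field_simp [gAux]; unfold gAux; ring
        rw [hnum]
        exact div_pos (gAux_pos ⟨hy.1, hy.2⟩) (by nlinarith)
      · positivity
  refine ⟨hmono, fun x hx => ?_⟩
  have hf2 : (Real.log 4 + Real.log ((2:ℝ) - 1)) / Real.log 2 = 2 := by
    rw [show (2:ℝ)-1 = 1 by norm_num, Real.log_one, add_zero, log_four,
      mul_div_assoc, div_self (Real.log_pos one_lt_two).ne', mul_one]
  rcases eq_or_lt_of_le hx.2 with h | h
  · rw [h]; rw [hf2]
  · have := hmono hx ⟨by norm_num, le_refl 2⟩ h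
    simp only at this
    rw [hf2] at this
    exact this.le
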